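/- Let A(ω₁) denote the one-point compactification of a discrete space of cardinality ℵ₁. The countable product A(ω₁)^ω is not M-scattered; consequently A(ω₁)^ω is not NY compact. -/

import Mathlib

open Topology Set

universe u v

/-- A space is *M-scattered* if every nonempty subspace contains a nonempty
relatively open second-countable subset. -/
def MScattered (X : Type*) [TopologicalSpace X] : Prop :=
  ∀ A : Set X, A.Nonempty → ∃ U : Set X, IsOpen U ∧ (A ∩ U).Nonempty ∧
    SecondCountableTopology ↥(A ∩ U)

/-- Corson compact: embeds into the Σ-product of copies of `[0,1]`. -/
def CorsonCompact (K : Type u) [TopologicalSpace K] : Prop :=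
  ∃ (Γ : Type u) (f : K → Γ → unitInterval),
    Topology.IsEmbedding f ∧ ∀ k, {γ | f k γ ≠ 0}.Countable

/-- Eberlein compact: embeds into `c₀(Γ)`. -/
def EberleinCompact (K : Type u) [TopologicalSpace K] : Prop :=
  ∃ (Γ : Type u) (f : K → Γ → unitInterval),
    Topology.IsEmbedding f ∧ ∀ k, ∀ ε : ℝ, 0 < ε → {γ | ε < (f k γ : ℝ)}.Finite

/-- NY compact: embeds into a σ-product of compact metrizable spaces. -/
def NYCompact (K : Type u) [TopologicalSpace K] : Prop :=
  ∃ (Γ : Type u) (X : Γ → Type u) (t : ∀ γ, TopologicalSpace (X γ)),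
    (∀ γ, @CompactSpace (X γ) (t γ)) ∧
    (∀ γ, @TopologicalSpace.MetrizableSpace (X γ) (t γ)) ∧
    ∃ (a : ∀ γ, X γ) (f : K → ∀ γ, X γ),
      @Topology.IsEmbedding K (∀ γ, X γ) _ (@Pi.topologicalSpace Γ X t) f ∧
      ∀ k, {γ | f k γ ≠ a γ}.Finite

/-- ω-Corson compact: embeds into the σ-product of copies of `[0,1]`. -/
def OmegaCorson (K : Type u) [TopologicalSpace K] : Prop :=
  ∃ (Γ : Type u) (f : K → Γ → unitInterval),
    Topology.IsEmbedding f ∧ ∀ k, {γ | f k γ ≠ 0}.Finite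

/-- Semi-Eberlein: embeds into `[0,1]^Γ` with `h(K) ∩ c₀(Γ)` dense in `h(K)`. -/
def SemiEberlein (K : Type u) [TopologicalSpace K] : Prop :=
  ∃ (Γ : Type u) (h : K → Γ → unitInterval), Topology.IsEmbedding h ∧
    Set.range h ⊆
      closure (Set.range h ∩ {x | ∀ ε : ℝ, 0 < ε → {γ | ε < (x γ : ℝ)}.Finite})

/-- ω-Valdivia: embeds into `[0,1]^Γ` with `h(K) ∩ σ([0,1]^Γ)` dense in `h(K)`. -/
def OmegaValdivia (K : Type u) [TopologicalSpace K] : Prop :=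
  ∃ (Γ : Type u) (h : K → Γ → unitInterval), Topology.IsEmbedding h ∧
    Set.range h ⊆ closure (Set.range h ∩ {x | {γ | x γ ≠ 0}.Finite})

/-- NY-Valdivia: embeds into a product of Hilbert cubes with the σ-product trace dense. -/
def NYValdivia (K : Type u) [TopologicalSpace K] : Prop :=
  ∃ (Γ : Type u) (h : K → Γ → ℕ → unitInterval), Topology.IsEmbedding h ∧
    Set.range h ⊆ closure (Set.range h ∩ {x | {γ | x γ ≠ 0}.Finite})

/-- The topology of the Alexandroff duplicate on `X × Bool`: points `(x, true)` are
isolated, and basic neighborhoods of `(x, false)` are `(U × Bool) \ {(x, true)}`. -/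
def adTopology (X : Type*) [TopologicalSpace X] : TopologicalSpace (X × Bool) where
  IsOpen V := ∀ x : X, (x, false) ∈ V →
    ∃ U : Set X, IsOpen U ∧ x ∈ U ∧ {p : X × Bool | p.1 ∈ U ∧ p ≠ (x, true)} ⊆ V
  isOpen_univ := fun x _ => ⟨Set.univ, isOpen_univ, trivial, fun _ _ => trivial⟩
  isOpen_inter := by
    intro V W hV hW x hx
    obtain ⟨U1, hU1, hx1, hs1⟩ := hV x hx.1
    obtain ⟨U2, hU2, hx2, hs2⟩ := hW x hx.2
    exact ⟨U1 ∩ U2, hU1.inter hU2, ⟨hx1, hx2⟩,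
      fun p hp => ⟨hs1 ⟨hp.1.1, hp.2⟩, hs2 ⟨hp.1.2, hp.2⟩⟩⟩
  isOpen_sUnion := by
    intro S hS x hx
    obtain ⟨V, hVS, hxV⟩ := hx
    obtain ⟨U, hU, hxU, hsub⟩ := hS V hVS x hxV
    exact ⟨U, hU, hxU, fun p hp => ⟨V, hVS, hsub hp⟩⟩

/-- A space is metalindelöf if every open cover has a point-countable open refinement. -/
def Metalindelof (X : Type*) [TopologicalSpace X] : Prop :=
  ∀ 𝒰 : Set (Set X), (∀ U ∈ 𝒰, IsOpen U) → ⋃₀ 𝒰 = Set.univ →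
    ∃ 𝒱 : Set (Set X), (∀ V ∈ 𝒱, IsOpen V) ∧ ⋃₀ 𝒱 = Set.univ ∧
      (∀ V ∈ 𝒱, ∃ U ∈ 𝒰, V ⊆ U) ∧ ∀ x : X, {V ∈ 𝒱 | x ∈ V}.Countable

/-- Hereditarily metalindelöf: every subspace is metalindelöf. -/
def HereditarilyMetalindelof (X : Type*) [TopologicalSpace X] : Prop :=
  ∀ A : Set X, Metalindelof ↥A

section AuxLemmas

open Topology TopologicalSpace

/-- Second countability passes to subsets. -/
lemma sc_subset {X : Type*} [TopologicalSpace X] {s t : Set X} (h : s ⊆ t)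
    (ht : SecondCountableTopology ↥t) : SecondCountableTopology ↥s := by
  haveI := ht
  have hincl : Topology.IsInducing (Set.inclusion h) :=
    Topology.IsInducing.of_comp (continuous_inclusion h) continuous_subtype_val
      (show Topology.IsInducing fun x : ↥s => (x : X) from Topology.IsInducing.subtypeVal)
  exact hincl.secondCountableTopology

/-- Key lemma: a nonempty compact subset of a σ-product (with uniformly bounded supports)
of second-countable T3 spaces has a nonempty relatively open second-countable piece. -/
lemma sigma_key : ∀ (n : ℕ) {Γ : Type u} {X : Γ → Type u} [∀ γ, TopologicalSpace (X γ)]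
    [∀ γ, T3Space (X γ)] [∀ γ, SecondCountableTopology (X γ)]
    (a : ∀ γ, X γ) (A : Set (∀ γ, X γ)), IsCompact A → A.Nonempty →
    (∀ y ∈ A, ∃ s : Finset Γ, s.card ≤ n ∧ ∀ γ ∉ s, y γ = a γ) →
    ∃ U : Set (∀ γ, X γ), IsOpen U ∧ (A ∩ U).Nonempty ∧
      SecondCountableTopology ↥(A ∩ U) := by
  intro n
  induction n with
  | zero =>
    intro Γ X _ _ _ a A hAc hAne hbd
    refine ⟨Set.univ, isOpen_univ, by simpa using hAne, ?_⟩
    have hsub : (A ∩ Set.univ).Subsingleton := by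
      rintro y ⟨hy, -⟩ z ⟨hz, -⟩
      obtain ⟨s, hs, hy'⟩ := hbd y hy
      obtain ⟨t, ht, hz'⟩ := hbd z hz
      have hse : s = ∅ := Finset.card_eq_zero.mp (Nat.le_zero.mp hs)
      have hte : t = ∅ := Finset.card_eq_zero.mp (Nat.le_zero.mp ht)
      have hya : y = a := funext fun γ => hy' γ (by simp [hse])
      have hza : z = a := funext fun γ => hz' γ (by simp [hte])
      rw [hya, hza]
    haveI : Subsingleton ↥(A ∩ Set.univ) := (Set.subsingleton_coe _).mpr hsub
    infer_instance
  | succ n IH =>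
    intro Γ X _ _ _ a A hAc hAne hbd
    classical
    by_cases hex : ∃ x ∈ A, x ≠ a
    · obtain ⟨x, hxA, hxne⟩ := hex
      obtain ⟨γ₀, hγ₀⟩ := Function.ne_iff.mp hxne
      have hO : ({a γ₀}ᶜ : Set (X γ₀)) ∈ 𝓝 (x γ₀) :=
        (isClosed_singleton.isOpen_compl).mem_nhds hγ₀
      obtain ⟨t0, ht0n, ht0c, ht0sub⟩ := exists_mem_nhds_isClosed_subset hO
      set W := interior t0 with hWdef
      have hWo : IsOpen W := isOpen_interior
      have hxW : x γ₀ ∈ W := mem_interior_iff_mem_nhds.mpr ht0n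
      have haW : a γ₀ ∉ closure W := by
        intro h
        have : closure W ⊆ t0 := closure_minimal interior_subset ht0c
        exact ht0sub (this h) rfl
      set G : Set (∀ γ, X γ) := A ∩ (fun y => y γ₀) ⁻¹' W with hGdef
      set A' := closure G with hA'def
      have hA'A : A' ⊆ A := closure_minimal Set.inter_subset_left hAc.isClosed
      have hA'c : IsCompact A' := hAc.of_isClosed_subset isClosed_closure hA'A
      have hA'W : ∀ y ∈ A', y γ₀ ∈ closure W := by
        intro y hy
        have h1 : A' ⊆ (fun y => y γ₀) ⁻¹' closure W :=
          closure_minimal (Set.inter_subset_right.trans (Set.preimage_mono subset_closure))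
            (isClosed_closure.preimage (continuous_apply γ₀))
        exact h1 hy
      set ρ : (∀ γ, X γ) → (∀ γ : {γ : Γ // γ ≠ γ₀}, X γ.1) := fun y γ => y γ.1 with hρdef
      have hρc : Continuous ρ := continuous_pi fun γ => continuous_apply γ.1
      set B' := ρ '' A' with hB'def
      have hB'c : IsCompact B' := hA'c.image hρc
      have hB'ne : B'.Nonempty := ⟨ρ x, ⟨x, subset_closure ⟨hxA, hxW⟩, rfl⟩⟩
      have hbd' : ∀ z ∈ B', ∃ s : Finset {γ : Γ // γ ≠ γ₀}, s.card ≤ n ∧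
          ∀ γ ∉ s, z γ = a γ.1 := by
        rintro z ⟨y, hyA', rfl⟩
        obtain ⟨s, hs, hy'⟩ := hbd y (hA'A hyA')
        have hγ₀s : γ₀ ∈ s := by
          by_contra h
          exact haW (hy' γ₀ h ▸ hA'W y hyA')
        refine ⟨(s.erase γ₀).subtype _, ?_, ?_⟩
        · calc ((s.erase γ₀).subtype _).card
              = ((s.erase γ₀).filter _).card := Finset.card_subtype _ _
            _ ≤ (s.erase γ₀).card := Finset.card_filter_le _ _
            _ = s.card - 1 := Finset.card_erase_of_mem hγ₀s
            _ ≤ n := by omega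
        · intro γ hγ
          apply hy'
          intro hmem
          exact hγ (Finset.mem_subtype.mpr (Finset.mem_erase.mpr ⟨γ.2, hmem⟩))
      obtain ⟨V, hVo, hVne, hVsc⟩ := IH (fun γ : {γ : Γ // γ ≠ γ₀} => a γ.1) B' hB'c hB'ne hbd'
      refine ⟨(fun y => y γ₀) ⁻¹' W ∩ ρ ⁻¹' V,
        (hWo.preimage (continuous_apply γ₀)).inter (hVo.preimage hρc), ?_, ?_⟩
      · obtain ⟨z, ⟨y, hyA', rfl⟩, hzV⟩ := hVne
        obtain ⟨g, hgV, hgA, hgW⟩ := mem_closure_iff.mp hyA' _ (hVo.preimage hρc) hzV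
        exact ⟨g, hgA, hgW, hgV⟩
      · haveI := hVsc
        have hsub : A ∩ ((fun y => y γ₀) ⁻¹' W ∩ ρ ⁻¹' V) ⊆ A' ∩ ρ ⁻¹' V := by
          rintro y ⟨hyA, hyW, hyV⟩
          exact ⟨subset_closure ⟨hyA, hyW⟩, hyV⟩
        refine sc_subset hsub ?_
        set Ψ : ↥(A' ∩ ρ ⁻¹' V) → X γ₀ × ↥(B' ∩ V) :=
          fun y => (y.1 γ₀, ⟨ρ y.1, ⟨y.1, y.2.1, rfl⟩, y.2.2⟩) with hΨdef
        have hΨc : Continuous Ψ := by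
          refine Continuous.prodMk ((continuous_apply γ₀).comp continuous_subtype_val) ?_
          exact Continuous.subtype_mk (hρc.comp continuous_subtype_val) _
        have hcomp : Topology.IsInducing
            ((Prod.map id (Subtype.val : ↥(B' ∩ V) → _)) ∘ Ψ) := by
          have heq : (Prod.map id (Subtype.val : ↥(B' ∩ V) → _)) ∘ Ψ =
              (Homeomorph.piSplitAt γ₀ X) ∘ (Subtype.val : ↥(A' ∩ ρ ⁻¹' V) → _) := rfl
          rw [heq]
          exact (Homeomorph.piSplitAt γ₀ X).isInducing.comp Topology.IsInducing.subtypeVal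
        exact (Topology.IsInducing.of_comp hΨc
          (continuous_id.prodMap continuous_subtype_val) hcomp).secondCountableTopology
    · push_neg at hex
      refine ⟨Set.univ, isOpen_univ, by simpa using hAne, ?_⟩
      have hsub : (A ∩ Set.univ).Subsingleton := by
        rintro y ⟨hy, -⟩ z ⟨hz, -⟩
        rw [hex y hy, hex z hz]
      haveI : Subsingleton ↥(A ∩ Set.univ) := (Set.subsingleton_coe _).mpr hsub
      infer_instance

/-- Every nonempty open subset of `A(ω₁)^ω` fails to be second countable. -/
lemma open_not_sc {D : Type} [TopologicalSpace D] [DiscreteTopology D]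
    (hD : Cardinal.mk D = Cardinal.aleph 1)
    (U : Set (ℕ → OnePoint D)) (hU : IsOpen U) (hne : U.Nonempty) :
    ¬ SecondCountableTopology ↥U := by
  intro hsc
  obtain ⟨x, hx⟩ := hne
  obtain ⟨I, u, hIu, hIsub⟩ := isOpen_pi_iff.mp hU x hx
  obtain ⟨m, hm⟩ := Infinite.exists_notMem_finset I
  have hy : ∀ d : D, Function.update x m (↑d) ∈ U := by
    intro d
    apply hIsub
    intro i hi
    rw [Function.update_of_ne (by rintro rfl; exact hm hi)]
    exact (hIu i hi).2
  haveI := hsc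
  obtain ⟨C, hCc, hCd⟩ := TopologicalSpace.exists_countable_dense ↥U
  have key : ∀ d : D, ∃ c : ↥U, c ∈ C ∧ (c : ℕ → OnePoint D) m = ↑d := by
    intro d
    have hOd : IsOpen {p : ↥U | (p : ℕ → OnePoint D) m = ↑d} := by
      have h1 : IsOpen ({(↑d : OnePoint D)} : Set (OnePoint D)) := by
        simpa using (OnePoint.isOpenEmbedding_coe (X := D)).isOpenMap {d} (isOpen_discrete _)
      have h2 : IsOpen {z : ℕ → OnePoint D | z m = ↑d} :=
        h1.preimage (continuous_apply (A := fun _ : ℕ => OnePoint D) m)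
      exact h2.preimage continuous_subtype_val
    have hne' : {p : ↥U | (p : ℕ → OnePoint D) m = ↑d}.Nonempty :=
      ⟨⟨_, hy d⟩, by simp⟩
    obtain ⟨c, hc1, hc2⟩ := hCd.inter_open_nonempty _ hOd hne'
    exact ⟨c, hc2, hc1⟩
  choose c hcC hcm using key
  have hinj : Function.Injective c := by
    intro d e h
    have hde : (↑d : OnePoint D) = ↑e := by rw [← hcm d, ← hcm e, h]
    exact OnePoint.coe_eq_coe.mp hde
  have hle : Cardinal.mk D ≤ Cardinal.aleph0 := by
    haveI : Countable ↥C := hCc.to_subtype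
    calc Cardinal.mk D ≤ Cardinal.mk ↥C :=
          Cardinal.mk_le_of_injective (f := fun d => (⟨c d, hcC d⟩ : ↥C))
            (fun d e hde => hinj (by simpa using congrArg Subtype.val hde))
      _ ≤ Cardinal.aleph0 := Cardinal.mk_le_aleph0
  rw [hD] at hle
  exact Cardinal.aleph0_lt_aleph_one.not_ge hle

end AuxLemmas

/-- the countable power of the one-point compactification of a discrete
space of cardinality ℵ₁ is not M-scattered, hence not NY compact. -/
theorem AOmegaOnePowOmega_not_MScattered_not_NY
    (D : Type) [TopologicalSpace D] [DiscreteTopology D]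
    (hD : Cardinal.mk D = Cardinal.aleph 1) :
    ¬ MScattered (ℕ → OnePoint D) ∧ ¬ NYCompact (ℕ → OnePoint D) := by
  have hnotsc := open_not_sc (D := D) hD
  constructor
  · intro hMS
    obtain ⟨U, hUo, hUne, hUsc⟩ := hMS Set.univ ⟨fun _ => OnePoint.infty, trivial⟩
    rw [Set.univ_inter] at hUne hUsc
    exact hnotsc U hUo hUne hUsc
  · rintro ⟨Γ, X, t, hcomp, hmet, a, f, hf, hfin⟩
    classical
    letI : ∀ γ, TopologicalSpace (X γ) := t
    haveI : ∀ γ, CompactSpace (X γ) := hcomp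
    haveI : ∀ γ, TopologicalSpace.MetrizableSpace (X γ) := hmet
    haveI hT3 : ∀ γ, T3Space (X γ) := fun γ => by
      letI := TopologicalSpace.metrizableSpaceMetric (X γ); infer_instance
    haveI hSCX : ∀ γ, SecondCountableTopology (X γ) := fun γ => inferInstance
    set B := Set.range f with hBdef
    have hBc : IsCompact B := isCompact_range hf.continuous
    set C : ℕ → Set (∀ γ, X γ) :=
      fun n => {y | ∃ s : Finset Γ, s.card ≤ n ∧ ∀ γ ∉ s, y γ = a γ} with hCdef
    have hCcl : ∀ n, IsClosed (C n) := by
      intro n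
      rw [← isOpen_compl_iff, isOpen_iff_mem_nhds]
      intro y hy
      have hbig : ∃ s₀ : Finset Γ, (↑s₀ : Set Γ) ⊆ {γ | y γ ≠ a γ} ∧ s₀.card = n + 1 := by
        by_cases hfin' : {γ | y γ ≠ a γ}.Finite
        · have hcard : n + 1 ≤ hfin'.toFinset.card := by
            by_contra h
            push_neg at h
            refine hy ⟨hfin'.toFinset, by omega, fun γ hγ => ?_⟩
            by_contra hne
            exact hγ (hfin'.mem_toFinset.mpr hne)
          obtain ⟨s₀, hs₀, hc⟩ := Finset.exists_subset_card_eq hcard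
          exact ⟨s₀, fun γ hγ => hfin'.mem_toFinset.mp (hs₀ hγ), hc⟩
        · obtain ⟨s₀, hsub, hc⟩ := Set.Infinite.exists_subset_card_eq hfin' (n + 1)
          exact ⟨s₀, hsub, hc⟩
      obtain ⟨s₀, hs₀sub, hs₀c⟩ := hbig
      have hOopen : IsOpen (⋂ γ ∈ s₀, (fun y' : ∀ γ, X γ => y' γ) ⁻¹' {a γ}ᶜ) :=
        isOpen_biInter_finset fun γ _ =>
          (isClosed_singleton.isOpen_compl).preimage (continuous_apply γ)
      refine Filter.mem_of_superset (hOopen.mem_nhds ?_) ?_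
      · exact Set.mem_iInter₂.mpr fun γ hγ => hs₀sub hγ
      · intro y' hy' hy'C
        obtain ⟨s, hsc, hs⟩ := hy'C
        have hss : s₀ ⊆ s := by
          intro γ hγ
          by_contra h
          exact (Set.mem_iInter₂.mp hy' γ hγ) (hs γ h)
        have := Finset.card_le_card hss
        omega
    haveI : CompactSpace ↥B := isCompact_iff_compactSpace.mp hBc
    haveI : Nonempty ↥B := ⟨⟨f (fun _ => OnePoint.infty), Set.mem_range_self _⟩⟩
    have hcover : ⋃ n, (Subtype.val ⁻¹' C n : Set ↥B) = Set.univ := by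
      ext b
      simp only [Set.mem_iUnion, Set.mem_univ, iff_true]
      obtain ⟨k, hk⟩ := b.2
      refine ⟨(hfin k).toFinset.card, (hfin k).toFinset, le_rfl, fun γ hγ => ?_⟩
      rw [← hk]
      by_contra h
      exact hγ ((hfin k).mem_toFinset.mpr h)
    obtain ⟨n, b, hb⟩ := nonempty_interior_of_iUnion_of_closed
      (fun n => (hCcl n).preimage continuous_subtype_val) hcover
    obtain ⟨U₀, hU₀o, hU₀eq⟩ := isOpen_induced_iff.mp
      (isOpen_interior (s := (Subtype.val ⁻¹' C n : Set ↥B)))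
    set G := B ∩ U₀ with hGdef
    have hGsub : G ⊆ C n := by
      rintro g ⟨hgB, hgU⟩
      have hmem : (⟨g, hgB⟩ : ↥B) ∈ interior (Subtype.val ⁻¹' C n) := by
        rw [← hU₀eq]; exact hgU
      exact (interior_subset hmem : (⟨g, hgB⟩ : ↥B) ∈ Subtype.val ⁻¹' C n)
    have hGne : G.Nonempty := by
      refine ⟨b.1, b.2, ?_⟩
      have hb' : b ∈ Subtype.val ⁻¹' U₀ := by rw [hU₀eq]; exact hb
      exact hb'
    set A := closure G with hAdef
    have hAB : A ⊆ B := closure_minimal Set.inter_subset_left hBc.isClosed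
    have hACn : A ⊆ C n := closure_minimal hGsub (hCcl n)
    have hAc : IsCompact A := hBc.of_isClosed_subset isClosed_closure hAB
    obtain ⟨V, hVo, hVne, hVsc⟩ := sigma_key n a A hAc (hGne.mono subset_closure)
      (fun y hy => hACn hy)
    obtain ⟨z, hzA, hzV⟩ := hVne
    obtain ⟨g, hgV, hgG⟩ := mem_closure_iff.mp hzA V hVo hzV
    set Wk := f ⁻¹' (U₀ ∩ V) with hWkdef
    have hWko : IsOpen Wk := (hU₀o.inter hVo).preimage hf.continuous
    obtain ⟨k, hk⟩ := hgG.1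
    have hWkne : Wk.Nonempty := ⟨k, by rw [Set.mem_preimage, hk]; exact ⟨hgG.2, hgV⟩⟩
    have hsub2 : B ∩ (U₀ ∩ V) ⊆ A ∩ V := by
      rintro y ⟨hyB, hyU, hyV⟩
      exact ⟨subset_closure ⟨hyB, hyU⟩, hyV⟩
    have hSCB : SecondCountableTopology ↥(B ∩ (U₀ ∩ V)) := sc_subset hsub2 hVsc
    have hscWk : SecondCountableTopology ↥Wk := by
      haveI := hSCB
      set g2 : ↥Wk → ↥(B ∩ (U₀ ∩ V)) := fun p => ⟨f p.1, ⟨p.1, rfl⟩, p.2⟩ with hg2def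
      have hg2c : Continuous g2 :=
        Continuous.subtype_mk (hf.continuous.comp continuous_subtype_val) _
      have hind : Topology.IsInducing (Subtype.val ∘ g2) := by
        have heq : (Subtype.val ∘ g2) = f ∘ (Subtype.val : ↥Wk → _) := rfl
        rw [heq]
        exact hf.isInducing.comp Topology.IsInducing.subtypeVal
      exact (Topology.IsInducing.of_comp hg2c continuous_subtype_val
        hind).secondCountableTopology
    exact hnotsc Wk hWko hWkne hscWk
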